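/- Define T(λ) = A(λ)² + (1/2)(B(λ)C(λ) + C(λ)B(λ)). Suppose v ∈ V satisfies b v = 0, s_j^- v = 0 and s_j^z v = −ħ σ_j v for each j, with σ_j ∈ ℂ; set a(λ) = (2λ − ω)/g² − Σ_j ħ σ_j/(λ − ε_j) and a′(λ) = 2/g² + Σ_j ħ σ_j/(λ − ε_j)². Let μ_1, …, μ_M be pairwise distinct complex numbers, none equal to any ε_j, satisfying the Bethe equations a(μ_i) + Σ_{k≠i} ħ/(μ_i − μ_k) = 0 for all i, and set Ω = C(μ_1)C(μ_2)⋯C(μ_M) v. Then for every λ ∉ {ε_1, …, ε_n} ∪ {μ_1, …, μ_M}: T(λ) Ω = Λ(λ) Ω, where Λ(λ) = a(λ)² + ħ a′(λ) + 2ħ Σ_{i=1}^M (a(λ) − a(μ_i))/(λ − μ_i). -/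

import Mathlib

open BigOperators Finset

lemma aux_comm_expand {V : Type*} [AddCommGroup V] [Module ℂ V] {n : ℕ}
    (Z W : Module.End ℂ V) (X Y : Fin n → Module.End ℂ V) (f g : Fin n → ℂ)
    (hZY : ∀ k, Z * Y k = Y k * Z)
    (hXW : ∀ j, X j * W = W * X j)
    (hXY : ∀ j k, j ≠ k → X j * Y k = Y k * X j) :
    (Z + ∑ j, f j • X j) * (W + ∑ k, g k • Y k)
      - (W + ∑ k, g k • Y k) * (Z + ∑ j, f j • X j)
    = (Z * W - W * Z) + ∑ j, (f j * g j) • (X j * Y j - Y j * X j) := by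
  set S : Module.End ℂ V := ∑ j, f j • X j with hS
  set Tt : Module.End ℂ V := ∑ k, g k • Y k with hT
  have hZT : Z * Tt = Tt * Z := by
    rw [hT, Finset.mul_sum, Finset.sum_mul]
    refine Finset.sum_congr rfl fun k _ => ?_
    rw [mul_smul_comm, smul_mul_assoc, hZY]
  have hSW : S * W = W * S := by
    rw [hS, Finset.mul_sum, Finset.sum_mul]
    refine Finset.sum_congr rfl fun j _ => ?_
    rw [mul_smul_comm, smul_mul_assoc, hXW]
  have hST : S * Tt - Tt * S = ∑ j, (f j * g j) • (X j * Y j - Y j * X j) := by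
    have h1 : S * Tt = ∑ j, ∑ k, (f j * g k) • (X j * Y k) := by
      rw [hS, Finset.sum_mul]
      refine Finset.sum_congr rfl fun j _ => ?_
      rw [hT, smul_mul_assoc, Finset.mul_sum, Finset.smul_sum]
      refine Finset.sum_congr rfl fun k _ => ?_
      rw [mul_smul_comm, smul_smul]
    have h2 : Tt * S = ∑ j, ∑ k, (f j * g k) • (Y k * X j) := by
      rw [hT, Finset.sum_mul]
      rw [Finset.sum_comm]
      refine Finset.sum_congr rfl fun j _ => ?_
      rw [hS, Finset.mul_sum]
      refine Finset.sum_congr rfl fun k _ => ?_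
      rw [smul_mul_assoc, mul_smul_comm, smul_smul, mul_comm (g j) (f k)]
    rw [h1, h2, ← Finset.sum_sub_distrib]
    refine Finset.sum_congr rfl fun j _ => ?_
    rw [← Finset.sum_sub_distrib]
    rw [Finset.sum_eq_single j]
    · rw [smul_sub]
    · intro k _ hk
      rw [hXY j k (Ne.symm hk), sub_self]
    · intro h; exact absurd (Finset.mem_univ j) h
  have expand : (Z + S) * (W + Tt) - (W + Tt) * (Z + S)
      = (Z * W - W * Z) + (Z * Tt - Tt * Z) + (S * W - W * S) + (S * Tt - Tt * S) := by
    noncomm_ring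
  rw [expand, hZT, hSW, hST, sub_self, sub_self, add_zero, add_zero]


/-- the Bethe vector `Ω = C(μ_1)⋯C(μ_M) v` is an eigenvector of
`T(λ)` with eigenvalue `Λ(λ) = a(λ)² + ħ a'(λ) + 2ħ Σ_i (a(λ)-a(μ_i))/(λ-μ_i)`,
provided the Bethe equations hold. -/
lemma list_sum_map_add' {ι M : Type*} [AddCommMonoid M] (l : List ι) (f g : ι → M) :
    (l.map fun x => f x + g x).sum = (l.map f).sum + (l.map g).sum := by
  induction l with
  | nil => simp
  | cons x t ih => simp only [List.map_cons, List.sum_cons, ih]; abel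

lemma pair_cancel (lam x y : ℂ) (h1 : lam - x ≠ 0) (h2 : lam - y ≠ 0) (h3 : x - y ≠ 0) :
    ((lam - x)*(lam - y))⁻¹ - 2 * ((x - y)⁻¹ * (lam - x)⁻¹)
      + (((lam - y)*(lam - x))⁻¹ - 2 * ((y - x)⁻¹ * (lam - y)⁻¹)) = 0 := by
  have h4 : y - x ≠ 0 := fun h => h3 (by linear_combination -h)
  field_simp
  ring

lemma list_sum_map_sub' {ι M : Type*} [AddCommGroup M] (l : List ι) (f g : ι → M) :
    (l.map fun x => f x - g x).sum = (l.map f).sum - (l.map g).sum := by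
  induction l with
  | nil => simp
  | cons x t ih => simp only [List.map_cons, List.sum_cons, ih]; abel

set_option maxHeartbeats 4000000

theorem bethe_eigenvector
    (V : Type*) [AddCommGroup V] [Module ℂ V]
    (n M : ℕ) (hbar g ω : ℂ) (hhbar : hbar ≠ 0) (hg : g ≠ 0)
    (ε : Fin n → ℂ) (hε : Function.Injective ε)
    (b bdag : Module.End ℂ V) (sz sp sm : Fin n → Module.End ℂ V)
    (hosc : b * bdag - bdag * b = hbar • (1 : Module.End ℂ V))
    (hpm : ∀ j, sp j * sm j - sm j * sp j = (2 * hbar) • sz j)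
    (hzp : ∀ j, sz j * sp j - sp j * sz j = hbar • sp j)
    (hzm : ∀ j, sz j * sm j - sm j * sz j = (-hbar) • sm j)
    (hsites : ∀ j k, j ≠ k →
      ∀ X ∈ ({sz j, sp j, sm j} : Set (Module.End ℂ V)),
      ∀ Y ∈ ({sz k, sp k, sm k} : Set (Module.End ℂ V)), Commute X Y)
    (hbspin : ∀ j, ∀ X ∈ ({sz j, sp j, sm j} : Set (Module.End ℂ V)),
      Commute b X ∧ Commute bdag X)
    (A B C T : ℂ → Module.End ℂ V)
    (hA : ∀ lam, (∀ j, lam ≠ ε j) →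
      A lam = ((2 * lam - ω) / g ^ 2) • (1 : Module.End ℂ V)
        + ∑ j, (lam - ε j)⁻¹ • sz j)
    (hB : ∀ lam, (∀ j, lam ≠ ε j) →
      B lam = (2 / g) • b + ∑ j, (lam - ε j)⁻¹ • sm j)
    (hC : ∀ lam, (∀ j, lam ≠ ε j) →
      C lam = (2 / g) • bdag + ∑ j, (lam - ε j)⁻¹ • sp j)
    (hT : ∀ lam, T lam = A lam ^ 2 + ((1 : ℂ) / 2) • (B lam * C lam + C lam * B lam))
    (v : V) (σ : Fin n → ℂ)
    (hbv : b v = 0) (hsmv : ∀ j, sm j v = 0)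
    (hszv : ∀ j, sz j v = (-(hbar * σ j)) • v)
    (a a' : ℂ → ℂ)
    (ha : ∀ lam, a lam = (2 * lam - ω) / g ^ 2 - ∑ j, hbar * σ j / (lam - ε j))
    (ha' : ∀ lam, a' lam = 2 / g ^ 2 + ∑ j, hbar * σ j / (lam - ε j) ^ 2)
    (μ : Fin M → ℂ) (hμ : Function.Injective μ)
    (hμε : ∀ i j, μ i ≠ ε j)
    (bethe : ∀ i, a (μ i) + ∑ k ∈ Finset.univ.erase i, hbar / (μ i - μ k) = 0)
    (Ω : V) (hΩ : Ω = ((List.ofFn fun i => C (μ i)).prod) v) :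
    ∀ lam : ℂ, (∀ j, lam ≠ ε j) → (∀ i, lam ≠ μ i) →
      T lam Ω
        = ((a lam) ^ 2 + hbar * a' lam
            + 2 * hbar * ∑ i, (a lam - a (μ i)) / (lam - μ i)) • Ω := by
  intro lam hlamE hlamμ
  -- abbreviation: regular points
  have memz : ∀ j, sz j ∈ ({sz j, sp j, sm j} : Set (Module.End ℂ V)) := fun j => by simp
  have memp : ∀ j, sp j ∈ ({sz j, sp j, sm j} : Set (Module.End ℂ V)) := fun j => by simp
  have memm : ∀ j, sm j ∈ ({sz j, sp j, sm j} : Set (Module.End ℂ V)) := fun j => by simp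
  -- cross-site commutation helpers
  have hsp_sp : ∀ j k, j ≠ k → sp j * sp k = sp k * sp j :=
    fun j k h => (hsites j k h _ (memp j) _ (memp k)).eq
  have hsz_sp : ∀ j k, j ≠ k → sz j * sp k = sp k * sz j :=
    fun j k h => (hsites j k h _ (memz j) _ (memp k)).eq
  have hsm_sp : ∀ j k, j ≠ k → sm j * sp k = sp k * sm j :=
    fun j k h => (hsites j k h _ (memm j) _ (memp k)).eq
  have hbd_sp : ∀ k, ((2/g) • bdag : Module.End ℂ V) * sp k = sp k * (2/g) • bdag := by
    intro k
    rw [smul_mul_assoc, mul_smul_comm, ((hbspin k _ (memp k)).2).eq]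
  have hb_sp : ∀ k, ((2/g) • b : Module.End ℂ V) * sp k = sp k * (2/g) • b := by
    intro k
    rw [smul_mul_assoc, mul_smul_comm, ((hbspin k _ (memp k)).1).eq]
  have hsz_bd : ∀ j, sz j * ((2/g) • bdag : Module.End ℂ V) = ((2/g) • bdag) * sz j := by
    intro j
    rw [smul_mul_assoc, mul_smul_comm, ((hbspin j _ (memz j)).2).eq]
  have hsm_bd : ∀ j, sm j * ((2/g) • bdag : Module.End ℂ V) = ((2/g) • bdag) * sm j := by
    intro j
    rw [smul_mul_assoc, mul_smul_comm, ((hbspin j _ (memm j)).2).eq]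
  have hone_sp : ∀ (c : ℂ) k, (c • (1:Module.End ℂ V)) * sp k = sp k * (c • 1) := by
    intro c k; rw [smul_mul_assoc, mul_smul_comm, one_mul, mul_one]
  have hsz_one : ∀ (c : ℂ) j, sz j * (c • (1:Module.End ℂ V)) = (c • 1) * sz j := by
    intro c j; rw [smul_mul_assoc, mul_smul_comm, one_mul, mul_one]
  -- C's commute
  have hCC : ∀ x y, (∀ j, x ≠ ε j) → (∀ j, y ≠ ε j) → C x * C y = C y * C x := by
    intro x y hx hy
    rw [hC x hx, hC y hy, ← sub_eq_zero]
    rw [aux_comm_expand ((2/g) • bdag) ((2/g) • bdag) sp sp _ _ hbd_sp (fun j => (hbd_sp j).symm) hsp_sp]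
    simp
  -- component commutator [A x, C y]
  have hACc : ∀ x y, (∀ j, x ≠ ε j) → (∀ j, y ≠ ε j) →
      A x * C y - C y * A x = ∑ j, (hbar * ((x - ε j)⁻¹ * (y - ε j)⁻¹)) • sp j := by
    intro x y hx hy
    rw [hA x hx, hC y hy]
    rw [aux_comm_expand _ _ sz sp _ _ (hone_sp _) hsz_bd hsz_sp]
    have h0 : ((2*x-ω)/g^2) • (1:Module.End ℂ V) * ((2/g) • bdag)
        - ((2/g) • bdag) * (((2*x-ω)/g^2) • (1:Module.End ℂ V)) = 0 := by
      simp only [smul_mul_assoc, mul_smul_comm, one_mul, mul_one]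
      rw [smul_comm, sub_self]
    rw [h0, zero_add]
    refine Finset.sum_congr rfl fun j _ => ?_
    rw [hzp j, smul_smul, mul_comm]
  -- component commutator [B x, C y]
  have hBCc : ∀ x y, (∀ j, x ≠ ε j) → (∀ j, y ≠ ε j) →
      B x * C y - C y * B x
        = (4*hbar/g^2) • (1:Module.End ℂ V)
          + ∑ j, (-(2*hbar) * ((x - ε j)⁻¹ * (y - ε j)⁻¹)) • sz j := by
    intro x y hx hy
    rw [hB x hx, hC y hy]
    rw [aux_comm_expand ((2/g)•b) ((2/g)•bdag) sm sp _ _ hb_sp hsm_bd hsm_sp]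
    congr 1
    · rw [smul_mul_assoc, mul_smul_comm, smul_mul_assoc, mul_smul_comm, smul_smul,
        smul_smul, ← smul_sub, hosc, smul_smul]
      congr 1
      field_simp
      ring
    · refine Finset.sum_congr rfl fun j _ => ?_
      have h1 : sm j * sp j - sp j * sm j = (-(2*hbar)) • sz j := by
        rw [← neg_sub, hpm j, ← neg_smul]
      rw [h1, smul_smul, mul_comm]
  -- actions on the vacuum vector
  have hAv : ∀ x, (∀ j, x ≠ ε j) → A x v = a x • v := by
    intro x hx
    rw [hA x hx, ha x]
    simp only [LinearMap.add_apply, LinearMap.smul_apply, LinearMap.sum_apply,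
      Module.End.one_apply]
    have h1 : ∀ j : Fin n, j ∈ Finset.univ → (x - ε j)⁻¹ • (sz j v)
        = (-(hbar * σ j / (x - ε j))) • v := by
      intro j _
      rw [hszv, smul_smul]
      congr 1
      have : x - ε j ≠ 0 := sub_ne_zero.mpr (hx j)
      field_simp
    rw [Finset.sum_congr rfl h1, ← Finset.sum_smul, ← add_smul]
    congr 1
    rw [Finset.sum_neg_distrib, ← sub_eq_add_neg]
  have hBv : ∀ x, (∀ j, x ≠ ε j) → B x v = 0 := by
    intro x hx
    rw [hB x hx]
    simp only [LinearMap.add_apply, LinearMap.smul_apply, LinearMap.sum_apply]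
    simp [hbv, hsmv]
  -- solved-form commutator [A x, C y] for x ≠ y
  have hAC : ∀ x y, (∀ j, x ≠ ε j) → (∀ j, y ≠ ε j) → x ≠ y →
      A x * C y = C y * A x + ((hbar/(x-y)) • C y - (hbar/(x-y)) • C x) := by
    intro x y hx hy hxy
    have h := hACc x y hx hy
    have key : (∑ j, (hbar * ((x - ε j)⁻¹ * (y - ε j)⁻¹)) • sp j)
        = (hbar/(x-y)) • C y - (hbar/(x-y)) • C x := by
      rw [hC y hy, hC x hx, smul_add, smul_add, add_sub_add_left_eq_sub]
      rw [Finset.smul_sum, Finset.smul_sum, ← Finset.sum_sub_distrib]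
      refine Finset.sum_congr rfl fun j _ => ?_
      rw [smul_smul, smul_smul, ← sub_smul]
      congr 1
      have h1 : x - ε j ≠ 0 := sub_ne_zero.mpr (hx j)
      have h2 : y - ε j ≠ 0 := sub_ne_zero.mpr (hy j)
      have h3 : x - y ≠ 0 := sub_ne_zero.mpr hxy
      field_simp
      ring
    rw [key] at h
    exact sub_eq_iff_eq_add'.mp h
  -- solved-form commutator [B x, C y] for x ≠ y
  have hBC : ∀ x y, (∀ j, x ≠ ε j) → (∀ j, y ≠ ε j) → x ≠ y →
      B x * C y = C y * B x + ((2*hbar/(x-y)) • A x - (2*hbar/(x-y)) • A y) := by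
    intro x y hx hy hxy
    have h := hBCc x y hx hy
    have key : (4*hbar/g^2) • (1:Module.End ℂ V)
          + ∑ j, (-(2*hbar) * ((x - ε j)⁻¹ * (y - ε j)⁻¹)) • sz j
        = (2*hbar/(x-y)) • A x - (2*hbar/(x-y)) • A y := by
      rw [hA x hx, hA y hy, smul_add, smul_add, add_sub_add_comm]
      congr 1
      · rw [smul_smul, smul_smul, ← sub_smul]
        congr 1
        have h3 : x - y ≠ 0 := sub_ne_zero.mpr hxy
        field_simp
        ring
      · rw [Finset.smul_sum, Finset.smul_sum, ← Finset.sum_sub_distrib]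
        refine Finset.sum_congr rfl fun j _ => ?_
        rw [smul_smul, smul_smul, ← sub_smul]
        congr 1
        have h1 : x - ε j ≠ 0 := sub_ne_zero.mpr (hx j)
        have h2 : y - ε j ≠ 0 := sub_ne_zero.mpr (hy j)
        have h3 : x - y ≠ 0 := sub_ne_zero.mpr hxy
        field_simp
        ring
    rw [key] at h
    exact sub_eq_iff_eq_add'.mp h
  -- action of T on the vacuum
  have hTv : ∀ x, (∀ j, x ≠ ε j) → T x v = (a x^2 + hbar * a' x) • v := by
    intro x hx
    have hBCv : (B x * C x) v = (2 * hbar * a' x) • v := by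
      have h2 : B x * C x = C x * B x + ((4*hbar/g^2) • (1:Module.End ℂ V)
          + ∑ j, (-(2*hbar) * ((x - ε j)⁻¹ * (x - ε j)⁻¹)) • sz j) :=
        sub_eq_iff_eq_add'.mp (hBCc x x hx hx)
      rw [h2]
      simp only [LinearMap.add_apply, Module.End.mul_apply, LinearMap.smul_apply,
        LinearMap.sum_apply, Module.End.one_apply]
      rw [hBv x hx, map_zero, zero_add]
      have h3 : ∀ j ∈ Finset.univ, (-(2*hbar) * ((x - ε j)⁻¹ * (x - ε j)⁻¹)) • sz j v
          = (2*hbar*(hbar * σ j / (x - ε j)^2)) • v := by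
        intro j _
        rw [hszv j, smul_smul]
        congr 1
        have h1 : x - ε j ≠ 0 := sub_ne_zero.mpr (hx j)
        rw [mul_div_assoc, div_eq_mul_inv, sq, mul_inv]
        ring
      rw [Finset.sum_congr rfl h3, ← Finset.sum_smul, ← add_smul]
      congr 1
      rw [ha' x, mul_add, Finset.mul_sum]
      congr 1
      field_simp
      ring
    rw [hT x]
    simp only [LinearMap.add_apply, LinearMap.smul_apply, Module.End.mul_apply, pow_two]
    rw [hAv x hx, map_smul, hAv x hx, smul_smul]
    rw [hBv x hx, map_zero, add_zero]
    rw [← Module.End.mul_apply (B x) (C x), hBCv, smul_smul]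
    rw [← add_smul]
    congr 1
    ring
  -- solved-form commutator [T x, C y] for x ≠ y
  have hTC : ∀ x y, (∀ j, x ≠ ε j) → (∀ j, y ≠ ε j) → x ≠ y →
      T x * C y = C y * T x
        + ((2*hbar/(x-y)) • (C y * A x) - (2*hbar/(x-y)) • (C x * A y)) := by
    intro x y hx hy hxy
    have hyx : hbar / (y - x) = -(hbar/(x-y)) := by
      rw [show y - x = -(x-y) by ring, div_neg]
    have e1 := hAC x y hx hy hxy
    have e2 := hAC y x hy hx (Ne.symm hxy)
    rw [hyx] at e2
    have e3 := hBC x y hx hy hxy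
    have e4 := hCC x y hx hy
    have e1' : ∀ Z : Module.End ℂ V, A x * (C y * Z)
        = C y * (A x * Z) + ((hbar/(x-y)) • (C y * Z) - (hbar/(x-y)) • (C x * Z)) := by
      intro Z
      rw [← mul_assoc, e1, add_mul, sub_mul, smul_mul_assoc, smul_mul_assoc, mul_assoc]
    have e3' : ∀ Z : Module.End ℂ V, B x * (C y * Z)
        = C y * (B x * Z) + ((2*hbar/(x-y)) • (A x * Z) - (2*hbar/(x-y)) • (A y * Z)) := by
      intro Z
      rw [← mul_assoc, e3, add_mul, sub_mul, smul_mul_assoc, smul_mul_assoc, mul_assoc]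
    have e4' : ∀ Z : Module.End ℂ V, C x * (C y * Z) = C y * (C x * Z) := by
      intro Z
      rw [← mul_assoc, e4, mul_assoc]
    rw [hT x]
    simp only [pow_two, add_mul, smul_mul_assoc, mul_add, mul_sub, smul_add, smul_sub,
      mul_assoc, e1, e1', e3, e3', e4, e4', e2, smul_smul, mul_smul_comm]
    module
  -- action of A on partial Bethe vectors
  have claimA : ∀ (l : List ℂ), l.Nodup → (∀ x ∈ l, ∀ j, x ≠ ε j) →
      ∀ ν, (∀ j, ν ≠ ε j) → ν ∉ l →
      A ν ((l.map C).prod v)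
        = (a ν + (l.map fun z => hbar/(ν-z)).sum) • (l.map C).prod v
          - (l.map fun z => (hbar/(ν-z)) • C ν (((l.erase z).map C).prod v)).sum := by
    intro l
    induction l with
    | nil =>
      intro _ _ ν hν _
      simp [hAv ν hν]
    | cons x t ih =>
      intro hnd hreg ν hν hνl
      obtain ⟨hxt, htnd⟩ := List.nodup_cons.mp hnd
      have hxreg : ∀ j, x ≠ ε j := hreg x (List.mem_cons_self (a := x) (l := t))
      have htreg : ∀ y ∈ t, ∀ j, y ≠ ε j := fun y hy => hreg y (List.mem_cons_of_mem x hy)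
      have hνx : ν ≠ x := fun h => hνl (h ▸ List.mem_cons_self (a := x) (l := t))
      have hνt : ν ∉ t := fun h => hνl (List.mem_cons_of_mem x h)
      have IH := ih htnd htreg ν hν hνt
      have key : ∀ y ∈ t, (C x) ((hbar/(ν-y)) • (C ν) (((t.erase y).map C).prod v))
          = (hbar/(ν-y)) • (C ν) ((((x::t).erase y).map C).prod v) := by
        intro y hyt
        have hxy : x ≠ y := fun h => hxt (h ▸ hyt)
        rw [map_smul]
        congr 1
        rw [← Module.End.mul_apply, hCC x ν hxreg hν, Module.End.mul_apply]
        congr 1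
        rw [List.erase_cons_tail (by simpa using hxy), List.map_cons, List.prod_cons,
          Module.End.mul_apply]
      simp only [List.map_cons, List.prod_cons, List.sum_cons, List.erase_cons_head,
        Module.End.mul_apply]
      rw [show (A ν) ((C x) (((t.map C).prod) v)) = (A ν * C x) (((t.map C).prod) v) from rfl,
        hAC ν x hν hxreg hνx]
      simp only [LinearMap.add_apply, LinearMap.sub_apply, LinearMap.smul_apply,
        Module.End.mul_apply]
      rw [IH, map_sub, map_smul, map_list_sum (C x)]
      simp only [List.map_map, Function.comp_def]
      rw [List.map_congr_left key]
      module
  -- main induction: action of T on partial Bethe vectors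
  have mainT : ∀ (l : List ℂ), l.Nodup → (∀ x ∈ l, ∀ j, x ≠ ε j) →
      ∀ lm, (∀ j, lm ≠ ε j) → lm ∉ l →
      T lm ((l.map C).prod v)
        = (a lm^2 + hbar * a' lm
            + (l.map fun z => 2*hbar*(a lm)/(lm-z)).sum
            + hbar^2 * (l.map fun z => ((l.erase z).map fun w => ((lm-z)*(lm-w))⁻¹).sum).sum)
            • (l.map C).prod v
          + (l.map fun z =>
              (-(2*hbar/(lm-z)) * (a z + ((l.erase z).map fun w => hbar/(z-w)).sum))
              • C lm (((l.erase z).map C).prod v)).sum := by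
    intro l
    induction l with
    | nil =>
      intro _ _ lm hlm _
      simpa using hTv lm hlm
    | cons x t ih =>
      intro hnd hreg lm hlm hlml
      obtain ⟨hxt, htnd⟩ := List.nodup_cons.mp hnd
      have hxreg : ∀ j, x ≠ ε j := hreg x (List.mem_cons_self (a := x) (l := t))
      have htreg : ∀ y ∈ t, ∀ j, y ≠ ε j := fun y hy => hreg y (List.mem_cons_of_mem x hy)
      have hlmx : lm ≠ x := fun h => hlml (h ▸ List.mem_cons_self (a := x) (l := t))
      have hlmt : lm ∉ t := fun h => hlml (List.mem_cons_of_mem x h)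
      have IH := ih htnd htreg lm hlm hlmt
      have cA1 := claimA t htnd htreg lm hlm hlmt
      have cA2 := claimA t htnd htreg x hxreg hxt
      have key1 : ∀ y ∈ t, (C x) ((C lm) (((t.erase y).map C).prod v))
          = (C lm) ((((x::t).erase y).map C).prod v) := by
        intro y hyt
        have hxy : x ≠ y := fun h => hxt (h ▸ hyt)
        rw [← Module.End.mul_apply, hCC x lm hxreg hlm, Module.End.mul_apply]
        congr 1
        rw [List.erase_cons_tail (by simpa using hxy), List.map_cons, List.prod_cons,
          Module.End.mul_apply]
      have key2 : ∀ y ∈ t, (C lm) ((C x) (((t.erase y).map C).prod v))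
          = (C lm) ((((x::t).erase y).map C).prod v) := by
        intro y hyt
        have hxy : x ≠ y := fun h => hxt (h ▸ hyt)
        congr 1
        rw [List.erase_cons_tail (by simpa using hxy), List.map_cons, List.prod_cons,
          Module.End.mul_apply]
      simp only [List.map_cons, List.prod_cons, List.sum_cons, List.erase_cons_head,
        Module.End.mul_apply]
      rw [show (T lm) ((C x) (((t.map C).prod) v)) = (T lm * C x) (((t.map C).prod) v) from rfl,
        hTC lm x hlm hxreg hlmx]
      simp only [LinearMap.add_apply, LinearMap.sub_apply, LinearMap.smul_apply,
        Module.End.mul_apply]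
      rw [IH, cA1, cA2]
      simp only [map_add, map_sub, map_smul, map_list_sum, List.map_map, Function.comp_def,
        smul_sub, smul_add, smul_smul, List.smul_sum]
      have m1 : (t.map fun z =>
            (-(2*hbar/(lm-z)) * (a z + ((t.erase z).map fun w => hbar/(z-w)).sum))
              • (C x) ((C lm) (((t.erase z).map C).prod v))).sum
          = (t.map fun z =>
            (-(2*hbar/(lm-z)) * (a z + ((t.erase z).map fun w => hbar/(z-w)).sum))
              • (C lm) ((((x::t).erase z).map C).prod v)).sum := by
        refine congrArg List.sum (List.map_congr_left fun z hz => ?_)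
        rw [key1 z hz]
      have m2 : (t.map fun z => (2*hbar/(lm-x) * (hbar/(lm-z)))
              • (C x) ((C lm) (((t.erase z).map C).prod v))).sum
          = (t.map fun z => (2*hbar/(lm-x) * (hbar/(lm-z)))
              • (C lm) ((((x::t).erase z).map C).prod v)).sum := by
        refine congrArg List.sum (List.map_congr_left fun z hz => ?_)
        rw [key1 z hz]
      have m3 : (t.map fun z => (2*hbar/(lm-x) * (hbar/(x-z)))
              • (C lm) ((C x) (((t.erase z).map C).prod v))).sum
          = (t.map fun z => (2*hbar/(lm-x) * (hbar/(x-z)))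
              • (C lm) ((((x::t).erase z).map C).prod v)).sum := by
        refine congrArg List.sum (List.map_congr_left fun z hz => ?_)
        rw [key2 z hz]
      have hc3 : (t.map fun z => hbar/(lm-z)).sum
          = hbar * (t.map fun z => (lm-z)⁻¹).sum := by
        rw [← List.sum_map_mul_left]
        exact congrArg List.sum (List.map_congr_left fun z _ => by rw [div_eq_mul_inv])
      have hc1 : (t.map fun w => ((lm-x)*(lm-w))⁻¹).sum
          = (lm-x)⁻¹ * (t.map fun w => (lm-w)⁻¹).sum := by
        rw [← List.sum_map_mul_left]
        exact congrArg List.sum (List.map_congr_left fun w _ => by rw [mul_inv])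
      have hc2 : (t.map fun z => ((lm-z)*(lm-x))⁻¹).sum
          = (lm-x)⁻¹ * (t.map fun z => (lm-z)⁻¹).sum := by
        rw [← List.sum_map_mul_left]
        refine congrArg List.sum (List.map_congr_left fun z _ => ?_)
        rw [mul_inv, mul_comm]
      have hZ2 : (t.map fun z => (((x::t).erase z).map fun w => ((lm-z)*(lm-w))⁻¹).sum).sum
          = (t.map fun z => ((lm-z)*(lm-x))⁻¹).sum
            + (t.map fun z => ((t.erase z).map fun w => ((lm-z)*(lm-w))⁻¹).sum).sum := by
        rw [← list_sum_map_add']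
        refine congrArg List.sum (List.map_congr_left fun z hz => ?_)
        have hxz : x ≠ z := fun h => hxt (h ▸ hz)
        rw [List.erase_cons_tail (by simpa using hxz), List.map_cons, List.sum_cons]
      have hd : (t.map fun z =>
            (-(2*hbar/(lm-z)) * (a z + (((x::t).erase z).map fun w => hbar/(z-w)).sum))
              • (C lm) ((((x::t).erase z).map C).prod v)).sum
          = (t.map fun z =>
              (-(2*hbar/(lm-z)) * (a z + ((t.erase z).map fun w => hbar/(z-w)).sum))
                • (C lm) ((((x::t).erase z).map C).prod v)).sum
            + ((t.map fun z => (2*hbar/(lm-x) * (hbar/(x-z)))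
                • (C lm) ((((x::t).erase z).map C).prod v)).sum
              - (t.map fun z => (2*hbar/(lm-x) * (hbar/(lm-z)))
                • (C lm) ((((x::t).erase z).map C).prod v)).sum) := by
        rw [← list_sum_map_sub', ← list_sum_map_add']
        refine congrArg List.sum (List.map_congr_left fun z hz => ?_)
        have hxz : x ≠ z := fun h => hxt (h ▸ hz)
        have hcoef : (-(2*hbar/(lm-z)) * (a z + (((x::t).erase z).map fun w => hbar/(z-w)).sum))
            = (-(2*hbar/(lm-z)) * (a z + ((t.erase z).map fun w => hbar/(z-w)).sum))
              + ((2*hbar/(lm-x) * (hbar/(x-z))) - (2*hbar/(lm-x) * (hbar/(lm-z)))) := by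
          rw [List.erase_cons_tail (by simpa using hxz), List.map_cons, List.sum_cons]
          have h1 : lm - z ≠ 0 := sub_ne_zero.mpr (fun h => hlmt (by rwa [h]))
          have h2 : lm - x ≠ 0 := sub_ne_zero.mpr hlmx
          have h3 : z - x ≠ 0 := sub_ne_zero.mpr (Ne.symm hxz)
          have h4 : x - z ≠ 0 := sub_ne_zero.mpr hxz
          field_simp
          ring
        rw [hcoef, add_smul, sub_smul]
      rw [m1, m2, m3, hd, hZ2, hc1, hc2, hc3]
      module
  -- ASSEMBLY
  have hΩ' : Ω = (((List.ofFn μ).map C).prod) v := by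
    rw [hΩ, List.map_ofFn]
    rfl
  have hnd : (List.ofFn μ).Nodup := (List.nodup_ofFn).mpr hμ
  have hregl : ∀ x ∈ List.ofFn μ, ∀ j, x ≠ ε j := by
    intro x hx
    obtain ⟨i, rfl⟩ := (List.mem_ofFn (f := μ) (a := x)).mp hx
    exact hμε i
  have hlamnot : lam ∉ List.ofFn μ := by
    intro h
    obtain ⟨i, hi⟩ := (List.mem_ofFn (f := μ) (a := lam)).mp h
    exact hlamμ i hi.symm
  have hconv : ∀ (i : Fin M) (f : ℂ → ℂ),
      (((List.ofFn μ).erase (μ i)).map f).sum = ∑ k ∈ Finset.univ.erase i, f (μ k) := by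
    intro i f
    have h1 : (List.ofFn μ).erase (μ i) = ((List.finRange M).erase i).map μ := by
      rw [List.ofFn_eq_map]
      exact (List.map_erase hμ _).symm
    have hnd2 : ((List.finRange M).erase i).Nodup := (List.nodup_finRange M).erase i
    have h2 : ((List.finRange M).erase i).toFinset = Finset.univ.erase i := by
      ext k
      simp [List.mem_toFinset, (List.nodup_finRange M).mem_erase_iff, Finset.mem_erase]
    rw [h1, List.map_map, ← List.sum_toFinset _ hnd2, h2]
    rfl
  have hfin : ∀ i : Fin M, lam - μ i ≠ 0 := fun i => sub_ne_zero.mpr (hlamμ i)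
  have hμμ : ∀ i k : Fin M, i ≠ k → μ i - μ k ≠ 0 :=
    fun i k h => sub_ne_zero.mpr (fun e => h (hμ e))
  have hvanish : ((List.ofFn μ).map fun z =>
      (-(2*hbar/(lam-z)) * (a z + (((List.ofFn μ).erase z).map fun w => hbar/(z-w)).sum))
        • C lam ((((List.ofFn μ).erase z).map C).prod v)).sum = 0 := by
    apply List.sum_eq_zero
    intro q hq
    rcases List.mem_map.mp hq with ⟨z, hzl, rfl⟩
    obtain ⟨i, rfl⟩ := (List.mem_ofFn (f := μ) (a := z)).mp hzl
    rw [hconv i (fun w => hbar/(μ i - w))]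
    rw [show a (μ i) + ∑ k ∈ Finset.univ.erase i, hbar/(μ i - μ k) = 0 from bethe i,
      mul_zero, zero_smul]
  have hA1 : ((List.ofFn μ).map fun z => 2*hbar*(a lam)/(lam-z)).sum
      = ∑ i, 2*hbar*(a lam)/(lam - μ i) := by
    rw [List.map_ofFn, List.sum_ofFn]
    rfl
  have hA2 : ((List.ofFn μ).map fun z =>
        (((List.ofFn μ).erase z).map fun w => ((lam-z)*(lam-w))⁻¹).sum).sum
      = ∑ i, ∑ k ∈ Finset.univ.erase i, ((lam-μ i)*(lam-μ k))⁻¹ := by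
    rw [List.map_ofFn, List.sum_ofFn]
    exact Finset.sum_congr rfl fun i _ => hconv i (fun w => ((lam-μ i)*(lam-w))⁻¹)
  rw [hΩ', mainT (List.ofFn μ) hnd hregl lam hlamE hlamnot, hvanish, add_zero, hA1, hA2]
  congr 1
  -- scalar identity
  have swap : ∀ F : Fin M → Fin M → ℂ,
      ∑ i, ∑ k ∈ Finset.univ.erase i, F i k = ∑ i, ∑ k ∈ Finset.univ.erase i, F k i := by
    intro F
    exact Finset.sum_comm' (by intro p q; simp [Finset.mem_erase]; exact ne_comm)
  have hzero : ∑ i, ∑ k ∈ Finset.univ.erase i,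
      (((lam - μ i)*(lam - μ k))⁻¹ - 2 * ((μ i - μ k)⁻¹ * (lam - μ i)⁻¹)) = 0 := by
    have h2 : (2:ℂ) * ∑ i, ∑ k ∈ Finset.univ.erase i,
        (((lam - μ i)*(lam - μ k))⁻¹ - 2 * ((μ i - μ k)⁻¹ * (lam - μ i)⁻¹)) = 0 := by
      rw [two_mul]
      nth_rewrite 2 [swap (fun i k => ((lam - μ i)*(lam - μ k))⁻¹
        - 2 * ((μ i - μ k)⁻¹ * (lam - μ i)⁻¹))]
      rw [← Finset.sum_add_distrib]
      refine Finset.sum_eq_zero fun i _ => ?_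
      rw [← Finset.sum_add_distrib]
      refine Finset.sum_eq_zero fun k hk => ?_
      have hik : i ≠ k := fun h => (Finset.mem_erase.mp hk).1 h.symm
      exact pair_cancel lam (μ i) (μ k) (hfin i) (hfin k) (hμμ i k hik)
    have := mul_eq_zero.mp h2
    simpa using this
  have hsub : ∑ i, ∑ k ∈ Finset.univ.erase i, ((lam-μ i)*(lam-μ k))⁻¹
      = ∑ i, (2*(lam - μ i)⁻¹) * ∑ k ∈ Finset.univ.erase i, (μ i - μ k)⁻¹ := by
    have h := hzero
    simp only [Finset.sum_sub_distrib, sub_eq_zero] at h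
    rw [h]
    refine Finset.sum_congr rfl fun i _ => ?_
    rw [Finset.mul_sum]
    refine Finset.sum_congr rfl fun k _ => ?_
    ring
  have hbethe' : ∀ i, a (μ i) = -(hbar * ∑ k ∈ Finset.univ.erase i, (μ i - μ k)⁻¹) := by
    intro i
    have h := bethe i
    rw [show ∑ k ∈ Finset.univ.erase i, hbar/(μ i - μ k)
        = hbar * ∑ k ∈ Finset.univ.erase i, (μ i - μ k)⁻¹ by
      rw [Finset.mul_sum]; exact Finset.sum_congr rfl fun k _ => div_eq_mul_inv _ _] at h
    exact eq_neg_of_add_eq_zero_left h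
  rw [hsub, add_assoc]
  congr 1
  rw [Finset.mul_sum, Finset.mul_sum, ← Finset.sum_add_distrib]
  refine Finset.sum_congr rfl fun i _ => ?_
  rw [hbethe' i]
  have h1 := hfin i
  field_simp
  ring
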